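/- Let n ≥ 4 be an even integer, q a nonzero complex number, and let i denote a fixed square root of −1 in ℂ. For every critical point p of W_0, set f_1 = z_2(p) and f_2 = i^{n/2}·(2q·z_1(p) − z_2(p)^{n/2}). Then f_1^{n+1} = 4q·f_1, f_1·f_2 = 0, and f_2^2 = −4q + f_1^n. -/

import Mathlib

open Finset

/-- One-based access to the coordinates of a point `z ∈ ℂⁿ`: `zc n z j = z_j` for
`1 ≤ j ≤ n` (and `0` for out-of-range indices, which are never used). -/
noncomputable def zc (n : ℕ) (z : Fin n → ℂ) (j : ℕ) : ℂ :=
  if h : 1 ≤ j ∧ j ≤ n then z ⟨j - 1, by omega⟩ else 0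

/-- The mirror Landau–Ginzburg potential of the quadric `Qⁿ`:
`W₀(z) = q z₁² z_n/(z₁⋯z_n − 1) + z₂ + ∑_{i=2}^{n−1} z_i z_{i+1}`,
defined on `Zⁿ = {z ∈ ℂⁿ : z₁⋯z_n ≠ 1}`. -/
noncomputable def W0 (n : ℕ) (q : ℂ) (z : Fin n → ℂ) : ℂ :=
  q * (zc n z 1) ^ 2 * zc n z n / ((∏ j, z j) - 1)
    + zc n z 2 + ∑ i ∈ Finset.Icc 2 (n - 1), zc n z i * zc n z (i + 1)

/-- `z` is a critical point of `W₀` in `Zⁿ`: `z₁⋯z_n ≠ 1` and all `n` partial derivatives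
`∂W₀/∂z_j` vanish at `z`. -/
def IsCritPt (n : ℕ) (q : ℂ) (z : Fin n → ℂ) : Prop :=
  (∏ j, z j) ≠ 1 ∧
    ∀ j : Fin n, deriv (fun t => W0 n q (Function.update z j t)) (z j) = 0

/-- Membership in `V(I₁)`: `z_{2i+1} = 1` for `1 ≤ i ≤ n/2−1`, `z_{2i} = z_n` for
`1 ≤ i ≤ n/2`, `q z₁² = 1`, and `z₁ z_n^{n/2} = 2`. -/
def MemV1 (n : ℕ) (q : ℂ) (z : Fin n → ℂ) : Prop :=
  (∀ i : ℕ, 1 ≤ i → i ≤ n / 2 - 1 → zc n z (2 * i + 1) = 1) ∧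
    (∀ i : ℕ, 1 ≤ i → i ≤ n / 2 → zc n z (2 * i) = zc n z n) ∧
    q * (zc n z 1) ^ 2 = 1 ∧ zc n z 1 * (zc n z n) ^ (n / 2) = 2

/-- Membership in `V(I₂)`: `z_{2i+1} = (−1)^i` for `1 ≤ i ≤ n/2−1`, `z_{2i} = 0` for
`1 ≤ i ≤ n/2`, and `q z₁² = (−1)^{(n−2)/2}`. -/
def MemV2 (n : ℕ) (q : ℂ) (z : Fin n → ℂ) : Prop :=
  (∀ i : ℕ, 1 ≤ i → i ≤ n / 2 - 1 → zc n z (2 * i + 1) = (-1 : ℂ) ^ i) ∧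
    (∀ i : ℕ, 1 ≤ i → i ≤ n / 2 → zc n z (2 * i) = 0) ∧
    q * (zc n z 1) ^ 2 = (-1 : ℂ) ^ ((n - 2) / 2)

lemma zc_eq (n : ℕ) (z : Fin n → ℂ) (m : ℕ) (h1 : 1 ≤ m) (h2 : m ≤ n) :
    zc n z m = z ⟨m - 1, by omega⟩ := dif_pos ⟨h1, h2⟩

lemma zc_update (n : ℕ) (z : Fin n → ℂ) (j : Fin n) (t : ℂ) (k : ℕ)
    (hk1 : 1 ≤ k) (hkn : k ≤ n) :
    zc n (Function.update z j t) k = if k = j.val + 1 then t else zc n z k := by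
  have hj := j.isLt
  rw [zc_eq n _ k hk1 hkn, zc_eq n z k hk1 hkn, Function.update_apply]
  have : ((⟨k - 1, by omega⟩ : Fin n) = j) ↔ (k = j.val + 1) := by
    simp only [Fin.ext_iff, Fin.val_mk]; omega
  simp [this]

lemma zc_self (n : ℕ) (z : Fin n → ℂ) (j : Fin n) : zc n z (j.val + 1) = z j := by
  have hj := j.isLt
  rw [zc_eq n z _ (by omega) (by omega)]
  congr 1

lemma W0_update_eq (n : ℕ) (hn : 4 ≤ n) (q : ℂ) (z : Fin n → ℂ) (j : Fin n) :
    (fun t => W0 n q (Function.update z j t)) = fun t =>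
      q * (if 1 = j.val + 1 then t else zc n z 1) ^ 2 *
          (if n = j.val + 1 then t else zc n z n) /
        (t * ∏ k ∈ univ.erase j, z k - 1)
      + (if 2 = j.val + 1 then t else zc n z 2)
      + ∑ i ∈ Finset.Icc 2 (n - 1),
          (if i = j.val + 1 then t else zc n z i) *
            (if i + 1 = j.val + 1 then t else zc n z (i + 1)) := by
  funext t
  unfold W0
  rw [Finset.prod_update_of_mem (Finset.mem_univ j)]
  simp only [← Finset.erase_eq]
  rw [zc_update n z j t 1 (by omega) (by omega),
      zc_update n z j t 2 (by omega) (by omega),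
      zc_update n z j t n (by omega) (by omega)]
  congr 1
  apply Finset.sum_congr rfl
  intro i hi
  simp only [Finset.mem_Icc] at hi
  rw [zc_update n z j t i (by omega) (by omega),
      zc_update n z j t (i + 1) (by omega) (by omega)]

lemma W0_hasDerivAt (n : ℕ) (hn : 4 ≤ n) (q : ℂ) (z : Fin n → ℂ)
    (hz : (∏ k, z k) ≠ 1) (j : Fin n) :
    HasDerivAt (fun t => W0 n q (Function.update z j t))
      ((((if 1 = j.val + 1 then 2 * q * zc n z 1 * zc n z n else 0)
          + (if n = j.val + 1 then q * zc n z 1 ^ 2 else 0)) * ((∏ k, z k) - 1)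
         - q * zc n z 1 ^ 2 * zc n z n * ∏ k ∈ univ.erase j, z k)
        / ((∏ k, z k) - 1) ^ 2
       + ((if 2 = j.val + 1 then 1 else 0)
          + ((if j.val + 1 ∈ Finset.Icc 2 (n - 1) then zc n z (j.val + 2) else 0)
             + (if j.val ∈ Finset.Icc 2 (n - 1) then zc n z j.val else 0))))
      (z j) := by
  have hj := j.isLt
  rw [W0_update_eq n hn q z j]
  -- numerator
  have hN : HasDerivAt (fun t => q * (if 1 = j.val + 1 then t else zc n z 1) ^ 2 *
      (if n = j.val + 1 then t else zc n z n))
      ((if 1 = j.val + 1 then 2 * q * zc n z 1 * zc n z n else 0)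
        + (if n = j.val + 1 then q * zc n z 1 ^ 2 else 0)) (z j) := by
    rcases eq_or_ne (j.val + 1) 1 with h1 | h1
    · have h2 : ¬ (n = j.val + 1) := by omega
      have hz1 : zc n z 1 = z j := by
        have := zc_self n z j; rwa [h1] at this
      have hfun : (fun t : ℂ => q * (if 1 = j.val + 1 then t else zc n z 1) ^ 2 *
          (if n = j.val + 1 then t else zc n z n)) = fun t => q * t ^ 2 * zc n z n := by
        funext t; rw [if_pos h1.symm, if_neg h2]
      rw [hfun, if_pos h1.symm, if_neg h2]
      have := ((hasDerivAt_pow 2 (z j)).const_mul q).mul_const (zc n z n)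
      refine this.congr_deriv ?_
      rw [hz1]; ring
    · have h1' : ¬ (1 = j.val + 1) := fun h => h1 h.symm
      rcases eq_or_ne (j.val + 1) n with h2 | h2
      · have hfun : (fun t : ℂ => q * (if 1 = j.val + 1 then t else zc n z 1) ^ 2 *
            (if n = j.val + 1 then t else zc n z n))
            = fun t => q * zc n z 1 ^ 2 * t := by
          funext t; rw [if_neg h1', if_pos h2.symm]
        rw [hfun, if_neg h1', if_pos h2.symm]
        have := (hasDerivAt_id (z j)).const_mul (q * zc n z 1 ^ 2)
        refine this.congr_deriv ?_
        ring
      · have h2' : ¬ (n = j.val + 1) := fun h => h2 h.symm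
        simp only [if_neg h1', if_neg h2']
        simpa using hasDerivAt_const (z j) (q * zc n z 1 ^ 2 * zc n z n)
  -- denominator
  have hDen : HasDerivAt (fun t => t * (∏ k ∈ univ.erase j, z k) - 1)
      (∏ k ∈ univ.erase j, z k) (z j) := by
    simpa using ((hasDerivAt_id (z j)).mul_const (∏ k ∈ univ.erase j, z k)).sub_const 1
  have hP : z j * ∏ k ∈ univ.erase j, z k = ∏ k, z k :=
    Finset.mul_prod_erase _ _ (Finset.mem_univ j)
  have hD0 : z j * (∏ k ∈ univ.erase j, z k) - 1 ≠ 0 := by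
    rw [hP]; exact sub_ne_zero.mpr hz
  -- linear term
  have hlin : HasDerivAt (fun t => (if 2 = j.val + 1 then t else zc n z 2))
      (if 2 = j.val + 1 then (1 : ℂ) else 0) (z j) := by
    rcases eq_or_ne 2 (j.val + 1) with h | h
    · simp only [if_pos h]; exact hasDerivAt_id (z j)
    · simp only [if_neg h]; exact hasDerivAt_const _ _
  -- the sum
  have hS : HasDerivAt (fun t => ∑ i ∈ Finset.Icc 2 (n - 1),
      (if i = j.val + 1 then t else zc n z i) *
        (if i + 1 = j.val + 1 then t else zc n z (i + 1)))
      (∑ i ∈ Finset.Icc 2 (n - 1), ((if i = j.val + 1 then zc n z (i + 1) else 0)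
        + (if i + 1 = j.val + 1 then zc n z i else 0))) (z j) := by
    apply HasDerivAt.fun_sum
    intro i hi
    rcases eq_or_ne i (j.val + 1) with h1 | h1
    · have h2 : ¬ (i + 1 = j.val + 1) := by omega
      simp only [if_pos h1, if_neg h2]
      simpa using (hasDerivAt_id (z j)).mul_const (zc n z (i + 1))
    · rcases eq_or_ne (i + 1) (j.val + 1) with h2 | h2
      · simp only [if_neg h1, if_pos h2]
        simpa using (hasDerivAt_id (z j)).const_mul (zc n z i)
      · simp only [if_neg h1, if_neg h2]
        simpa using hasDerivAt_const (z j) (zc n z i * zc n z (i + 1))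
  have hSval : (∑ i ∈ Finset.Icc 2 (n - 1), ((if i = j.val + 1 then zc n z (i + 1) else 0)
        + (if i + 1 = j.val + 1 then zc n z i else 0)))
      = (if j.val + 1 ∈ Finset.Icc 2 (n - 1) then zc n z (j.val + 2) else 0)
        + (if j.val ∈ Finset.Icc 2 (n - 1) then zc n z j.val else 0) := by
    rw [Finset.sum_add_distrib]
    congr 1
    · rw [show (fun i => if i = j.val + 1 then zc n z (i + 1) else (0:ℂ)) = fun i => if i = j.val + 1 then zc n z (i + 1) else 0 from rfl]
      rw [Finset.sum_ite_eq' (Finset.Icc 2 (n - 1)) (j.val + 1) (fun i => zc n z (i + 1))]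
    · have : ∀ i ∈ Finset.Icc 2 (n - 1),
          (if i + 1 = j.val + 1 then zc n z i else (0:ℂ)) = if i = j.val then zc n z i else 0 := by
        intro i hi
        simp only [Finset.mem_Icc] at hi
        congr 1
        simp only [eq_iff_iff]; omega
      rw [Finset.sum_congr rfl this,
        Finset.sum_ite_eq' (Finset.Icc 2 (n - 1)) j.val (fun i => zc n z i)]
  have H := ((hN.div hDen hD0).add hlin).add hS
  rw [hSval] at H
  refine H.congr_deriv ?_
  rw [hP]
  have e1 : (if 1 = j.val + 1 then z j else zc n z 1) = zc n z 1 := by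
    rcases eq_or_ne 1 (j.val + 1) with h | h
    · rw [if_pos h]
      have := zc_self n z j; rw [← h] at this; exact this.symm
    · rw [if_neg h]
  have e2 : (if n = j.val + 1 then z j else zc n z n) = zc n z n := by
    rcases eq_or_ne n (j.val + 1) with h | h
    · rw [if_pos h]
      have := zc_self n z j; rw [← h] at this; exact this.symm
    · rw [if_neg h]
  rw [e1, e2]
  ring

lemma crit_eq (n : ℕ) (hn : 4 ≤ n) (q : ℂ) (z : Fin n → ℂ)
    (hz : IsCritPt n q z) (j : Fin n) :
    ((if 1 = j.val + 1 then 2 * q * zc n z 1 * zc n z n else 0)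
        + (if n = j.val + 1 then q * zc n z 1 ^ 2 else 0)) * ((∏ k, z k) - 1)
      - q * zc n z 1 ^ 2 * zc n z n * (∏ k ∈ univ.erase j, z k)
      + ((if 2 = j.val + 1 then 1 else 0)
         + ((if j.val + 1 ∈ Finset.Icc 2 (n - 1) then zc n z (j.val + 2) else 0)
            + (if j.val ∈ Finset.Icc 2 (n - 1) then zc n z j.val else 0)))
        * ((∏ k, z k) - 1) ^ 2 = 0 := by
  obtain ⟨hP, hcrit⟩ := hz
  have h := (W0_hasDerivAt n hn q z hP j).deriv
  rw [hcrit j] at h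
  have hD : ((∏ k, z k) - 1) ≠ 0 := sub_ne_zero.mpr hP
  have h2 := eq_neg_of_add_eq_zero_left h.symm
  rw [div_eq_iff (pow_ne_zero 2 hD)] at h2
  linear_combination h2

lemma K1 (n : ℕ) (hn : 4 ≤ n) (q : ℂ) (z : Fin n → ℂ) (hz : IsCritPt n q z) :
    q * zc n z 1 ^ 2 * zc n z n * ((∏ k, z k) - 2) = 0 := by
  set j : Fin n := ⟨0, by omega⟩ with hj
  have hv : (j : ℕ) = 0 := rfl
  have h := crit_eq n hn q z hz j
  rw [hv] at h
  rw [if_pos rfl, if_neg (by omega : ¬(n = 0 + 1)), if_neg (by omega : ¬(2 = 0 + 1)),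
    if_neg (by simp only [Finset.mem_Icc]; omega : ¬(0 + 1 ∈ Finset.Icc 2 (n - 1))),
    if_neg (by simp only [Finset.mem_Icc]; omega : ¬((0:ℕ) ∈ Finset.Icc 2 (n - 1)))] at h
  have hzp : zc n z 1 * (∏ k ∈ univ.erase j, z k) = ∏ k, z k := by
    have h1 : zc n z 1 = z j := by
      have := zc_self n z j; rw [hv] at this; norm_num at this; exact this
    rw [h1]; exact Finset.mul_prod_erase _ _ (Finset.mem_univ j)
  linear_combination zc n z 1 * h + (q * zc n z 1 ^ 2 * zc n z n) * hzp

lemma K2 (n : ℕ) (hn : 4 ≤ n) (q : ℂ) (z : Fin n → ℂ) (hz : IsCritPt n q z) :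
    zc n z 2 * (1 + zc n z 3) * ((∏ k, z k) - 1) ^ 2
      = q * zc n z 1 ^ 2 * zc n z n * (∏ k, z k) := by
  set j : Fin n := ⟨1, by omega⟩ with hj
  have hv : (j : ℕ) = 1 := rfl
  have h := crit_eq n hn q z hz j
  rw [hv] at h
  rw [if_neg (by omega : ¬(1 = 1 + 1)), if_neg (by omega : ¬(n = 1 + 1)),
    if_pos (rfl : (2:ℕ) = 1 + 1),
    if_pos (by simp only [Finset.mem_Icc]; omega : (1 + 1 ∈ Finset.Icc 2 (n - 1))),
    if_neg (by simp only [Finset.mem_Icc]; omega : ¬((1:ℕ) ∈ Finset.Icc 2 (n - 1)))] at h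
  norm_num at h
  have hzp : zc n z 2 * (∏ k ∈ univ.erase j, z k) = ∏ k, z k := by
    have h1 : zc n z 2 = z j := by
      have := zc_self n z j; rw [hv] at this; norm_num at this; exact this
    rw [h1]; exact Finset.mul_prod_erase _ _ (Finset.mem_univ j)
  linear_combination zc n z 2 * h + (q * zc n z 1 ^ 2 * zc n z n) * hzp

lemma Kmid (n : ℕ) (hn : 4 ≤ n) (q : ℂ) (z : Fin n → ℂ) (hz : IsCritPt n q z)
    (m : ℕ) (h3 : 3 ≤ m) (hm : m ≤ n - 1) :
    zc n z m * (zc n z (m - 1) + zc n z (m + 1)) * ((∏ k, z k) - 1) ^ 2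
      = q * zc n z 1 ^ 2 * zc n z n * (∏ k, z k) := by
  set j : Fin n := ⟨m - 1, by omega⟩ with hj
  have hv : (j : ℕ) = m - 1 := rfl
  have h := crit_eq n hn q z hz j
  rw [hv] at h
  rw [(by omega : m - 1 + 1 = m), (by omega : m - 1 + 2 = m + 1)] at h
  rw [if_neg (by omega : ¬(1 = m)), if_neg (by omega : ¬(n = m)),
    if_neg (by omega : ¬(2 = m)),
    if_pos (by simp only [Finset.mem_Icc]; omega : (m ∈ Finset.Icc 2 (n - 1))),
    if_pos (by simp only [Finset.mem_Icc]; omega : (m - 1 ∈ Finset.Icc 2 (n - 1)))] at h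
  have hzp : zc n z m * (∏ k ∈ univ.erase j, z k) = ∏ k, z k := by
    have h1 : zc n z m = z j := by
      have := zc_self n z j; rw [hv, (by omega : m - 1 + 1 = m)] at this; exact this
    rw [h1]; exact Finset.mul_prod_erase _ _ (Finset.mem_univ j)
  linear_combination zc n z m * h + (q * zc n z 1 ^ 2 * zc n z n) * hzp

lemma Kn (n : ℕ) (hn : 4 ≤ n) (q : ℂ) (z : Fin n → ℂ) (hz : IsCritPt n q z) :
    q * zc n z 1 ^ 2 * zc n z n * ((∏ k, z k) - 1)
      + zc n z n * zc n z (n - 1) * ((∏ k, z k) - 1) ^ 2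
      = q * zc n z 1 ^ 2 * zc n z n * (∏ k, z k) := by
  set j : Fin n := ⟨n - 1, by omega⟩ with hj
  have hv : (j : ℕ) = n - 1 := rfl
  have h := crit_eq n hn q z hz j
  rw [hv] at h
  rw [(by omega : n - 1 + 1 = n)] at h
  rw [if_neg (by omega : ¬(1 = n)), if_pos (rfl : n = n),
    if_neg (by omega : ¬(2 = n)),
    if_neg (by simp only [Finset.mem_Icc]; omega : ¬(n ∈ Finset.Icc 2 (n - 1))),
    if_pos (by simp only [Finset.mem_Icc]; omega : (n - 1 ∈ Finset.Icc 2 (n - 1)))] at h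
  have hzp : zc n z n * (∏ k ∈ univ.erase j, z k) = ∏ k, z k := by
    have h1 : zc n z n = z j := by
      have := zc_self n z j; rw [hv, (by omega : n - 1 + 1 = n)] at this; exact this
    rw [h1]; exact Finset.mul_prod_erase _ _ (Finset.mem_univ j)
  linear_combination zc n z n * h + (q * zc n z 1 ^ 2 * zc n z n) * hzp

lemma E2z (n : ℕ) (hn : 4 ≤ n) (q : ℂ) (z : Fin n → ℂ) (hz : IsCritPt n q z)
    (hA : q * zc n z 1 ^ 2 * zc n z n = 0) :
    (1 + zc n z 3) * ((∏ k, z k) - 1) ^ 2 = 0 := by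
  set j : Fin n := ⟨1, by omega⟩ with hj
  have hv : (j : ℕ) = 1 := rfl
  have h := crit_eq n hn q z hz j
  rw [hv] at h
  rw [if_neg (by omega : ¬(1 = 1 + 1)), if_neg (by omega : ¬(n = 1 + 1)),
    if_pos (rfl : (2:ℕ) = 1 + 1),
    if_pos (by simp only [Finset.mem_Icc]; omega : (1 + 1 ∈ Finset.Icc 2 (n - 1))),
    if_neg (by simp only [Finset.mem_Icc]; omega : ¬((1:ℕ) ∈ Finset.Icc 2 (n - 1)))] at h
  norm_num at h
  linear_combination h + (∏ k ∈ univ.erase j, z k) * hA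

lemma Emidz (n : ℕ) (hn : 4 ≤ n) (q : ℂ) (z : Fin n → ℂ) (hz : IsCritPt n q z)
    (hA : q * zc n z 1 ^ 2 * zc n z n = 0)
    (m : ℕ) (h3 : 3 ≤ m) (hm : m ≤ n - 1) :
    (zc n z (m - 1) + zc n z (m + 1)) * ((∏ k, z k) - 1) ^ 2 = 0 := by
  set j : Fin n := ⟨m - 1, by omega⟩ with hj
  have hv : (j : ℕ) = m - 1 := rfl
  have h := crit_eq n hn q z hz j
  rw [hv] at h
  rw [(by omega : m - 1 + 1 = m), (by omega : m - 1 + 2 = m + 1)] at h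
  rw [if_neg (by omega : ¬(1 = m)), if_neg (by omega : ¬(n = m)),
    if_neg (by omega : ¬(2 = m)),
    if_pos (by simp only [Finset.mem_Icc]; omega : (m ∈ Finset.Icc 2 (n - 1))),
    if_pos (by simp only [Finset.mem_Icc]; omega : (m - 1 ∈ Finset.Icc 2 (n - 1)))] at h
  linear_combination h + (∏ k ∈ univ.erase j, z k) * hA

lemma Enz (n : ℕ) (hn : 4 ≤ n) (q : ℂ) (z : Fin n → ℂ) (hz : IsCritPt n q z)
    (hA : q * zc n z 1 ^ 2 * zc n z n = 0) :
    q * zc n z 1 ^ 2 * ((∏ k, z k) - 1)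
      + zc n z (n - 1) * ((∏ k, z k) - 1) ^ 2 = 0 := by
  set j : Fin n := ⟨n - 1, by omega⟩ with hj
  have hv : (j : ℕ) = n - 1 := rfl
  have h := crit_eq n hn q z hz j
  rw [hv] at h
  rw [(by omega : n - 1 + 1 = n)] at h
  rw [if_neg (by omega : ¬(1 = n)), if_pos (rfl : n = n),
    if_neg (by omega : ¬(2 = n)),
    if_neg (by simp only [Finset.mem_Icc]; omega : ¬(n ∈ Finset.Icc 2 (n - 1))),
    if_pos (by simp only [Finset.mem_Icc]; omega : (n - 1 ∈ Finset.Icc 2 (n - 1)))] at h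
  linear_combination h + (∏ k ∈ univ.erase j, z k) * hA

lemma crit_cases (n : ℕ) (hn : 4 ≤ n) (hev : Even n) (q : ℂ) (hq : q ≠ 0)
    (z : Fin n → ℂ) (hz : IsCritPt n q z) (hP : (∏ k, z k) ≠ 1) :
    (q * zc n z 1 ^ 2 = 1 ∧ zc n z 1 * zc n z 2 ^ (n / 2) = 2) ∨
      (zc n z 2 = 0 ∧ q * zc n z 1 ^ 2 = (-1 : ℂ) ^ (n / 2 - 1)) := by
  obtain ⟨t, ht⟩ := hev
  have ht2 : n = 2 * t := by omega
  have hD : (∏ k, z k) - 1 ≠ 0 := sub_ne_zero.mpr hP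
  have hD2 : ((∏ k, z k) - 1) ^ 2 ≠ 0 := pow_ne_zero 2 hD
  have hfac : ∀ w : ℂ, w * ((∏ k, z k) - 1) ^ 2 = 0 → w = 0 := by
    intro w h
    rcases mul_eq_zero.mp h with h | h
    · exact h
    · exact absurd h hD2
  rcases eq_or_ne (q * zc n z 1 ^ 2 * zc n z n) 0 with hA | hA
  · -- Case V(I₂)
    right
    have hz3 : zc n z 3 = -1 := by
      have h := hfac _ (E2z n hn q z hz hA)
      linear_combination h
    -- odd chain
    have hodd : ∀ i : ℕ, 1 ≤ i → 2 * i + 1 ≤ n - 1 → zc n z (2 * i + 1) = (-1 : ℂ) ^ i := by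
      intro i
      induction i with
      | zero => omega
      | succ i ih =>
        intro _ hle
        rcases Nat.eq_zero_or_pos i with h0 | h0
        · subst h0; norm_num [hz3]
        · have h := hfac _ (Emidz n hn q z hz hA (2 * i + 2) (by omega) (by omega))
          rw [(by omega : 2 * i + 2 - 1 = 2 * i + 1), (by omega : 2 * i + 2 + 1 = 2 * (i + 1) + 1)] at h
          have hprev := ih h0 (by omega)
          rw [hprev] at h
          rw [pow_succ]
          linear_combination h
    -- even chain
    have heven : ∀ i : ℕ, 1 ≤ i → 2 * i ≤ n → zc n z (2 * i) = (-1 : ℂ) ^ (i - 1) * zc n z 2 := by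
      intro i
      induction i with
      | zero => omega
      | succ i ih =>
        intro _ hle
        rcases Nat.eq_zero_or_pos i with h0 | h0
        · subst h0; norm_num
        · have h := hfac _ (Emidz n hn q z hz hA (2 * i + 1) (by omega) (by omega))
          rw [(by omega : 2 * i + 1 - 1 = 2 * i), (by omega : 2 * i + 1 + 1 = 2 * (i + 1))] at h
          have hprev := ih h0 (by omega)
          rw [hprev] at h
          rw [(by omega : i + 1 - 1 = (i - 1) + 1), pow_succ]
          linear_combination h
    have hn1 : zc n z (n - 1) = (-1 : ℂ) ^ (n / 2 - 1) := by
      have := hodd (n / 2 - 1) (by omega) (by omega)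
      rw [(by omega : 2 * (n / 2 - 1) + 1 = n - 1)] at this
      exact this
    have hn1ne : zc n z (n - 1) ≠ 0 := by
      rw [hn1]
      exact pow_ne_zero _ (by norm_num)
    have hEn := Enz n hn q z hz hA
    have hz1ne : zc n z 1 ≠ 0 := by
      intro h0
      rw [h0] at hEn
      have : zc n z (n - 1) * ((∏ k, z k) - 1) ^ 2 = 0 := by linear_combination hEn
      exact hn1ne (hfac _ this)
    have hzn : zc n z n = 0 := by
      rcases mul_eq_zero.mp hA with h | h
      · rcases mul_eq_zero.mp h with h | h
        · exact absurd h hq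
        · exact absurd h (pow_ne_zero 2 hz1ne)
      · exact h
    have hz2 : zc n z 2 = 0 := by
      have h := heven (n / 2) (by omega) (by omega)
      rw [(by omega : 2 * (n / 2) = n), hzn] at h
      have := h.symm
      rcases mul_eq_zero.mp this with h' | h'
      · exact absurd h' (pow_ne_zero _ (by norm_num))
      · exact h'
    have hProd : (∏ k, z k) = 0 := by
      apply Finset.prod_eq_zero (Finset.mem_univ (⟨n - 1, by omega⟩ : Fin n))
      have h := zc_eq n z n (by omega) (by omega)
      rw [← h]
      exact hzn
    refine ⟨hz2, ?_⟩
    rw [hProd] at hEn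
    rw [← hn1]
    linear_combination -hEn
  · -- Case V(I₁)
    left
    have hP2 : (∏ k, z k) = 2 := by
      have h := K1 n hn q z hz
      rcases mul_eq_zero.mp h with h' | h'
      · exact absurd h' hA
      · linear_combination h'
    have hD1 : (∏ k, z k) - 1 = 1 := by rw [hP2]; norm_num
    have hPne : (∏ k, z k) ≠ 0 := by rw [hP2]; norm_num
    have hne : ∀ k : Fin n, z k ≠ 0 := by
      intro k hk
      exact hPne (Finset.prod_eq_zero (Finset.mem_univ k) hk)
    have hnez : ∀ m, 1 ≤ m → m ≤ n → zc n z m ≠ 0 := by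
      intro m h1 h2
      rw [zc_eq n z m h1 h2]
      exact hne _
    -- the auxiliary sequence
    set v : ℕ → ℂ := fun m => if m = 1 then zc n z 2 else zc n z m * zc n z (m + 1) with hvdef
    have hrec : ∀ m, 1 ≤ m → m ≤ n - 2 →
        v m + v (m + 1) = 2 * (q * zc n z 1 ^ 2 * zc n z n) := by
      intro m h1 h2
      rcases Nat.eq_or_lt_of_le h1 with h0 | h0
      · -- m = 1
        have hK := K2 n hn q z hz
        rw [hD1, hP2] at hK
        rw [← h0]
        show (if (1:ℕ) = 1 then zc n z 2 else _) + (if (2:ℕ) = 1 then zc n z 2 else zc n z 2 * zc n z (2+1)) = _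
        rw [if_pos rfl, if_neg (by omega)]
        linear_combination hK
      · -- 2 ≤ m
        have hK := Kmid n hn q z hz (m + 1) (by omega) (by omega)
        rw [hD1, hP2] at hK
        rw [(by omega : m + 1 - 1 = m)] at hK
        show (if m = 1 then zc n z 2 else zc n z m * zc n z (m+1))
          + (if m + 1 = 1 then zc n z 2 else zc n z (m+1) * zc n z (m+1+1)) = _
        rw [if_neg (by omega), if_neg (by omega)]
        rw [(by omega : m + 1 + 1 = m + 2)]
        linear_combination hK
    have hbase : v (n - 1) = q * zc n z 1 ^ 2 * zc n z n := by
      have hK := Kn n hn q z hz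
      rw [hD1, hP2] at hK
      show (if n - 1 = 1 then zc n z 2 else zc n z (n - 1) * zc n z (n - 1 + 1)) = _
      rw [if_neg (by omega), (by omega : n - 1 + 1 = n)]
      linear_combination hK
    have hall : ∀ d m, m + d = n - 1 → 1 ≤ m → v m = q * zc n z 1 ^ 2 * zc n z n := by
      intro d
      induction d with
      | zero =>
        intro m hm _
        rw [(by omega : m = n - 1)]
        exact hbase
      | succ d ih =>
        intro m hm h1
        have h2 := hrec m h1 (by omega)
        have h3 := ih (m + 1) (by omega) (by omega)
        rw [h3] at h2
        linear_combination h2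
    have huA : ∀ m, 1 ≤ m → m ≤ n - 1 → v m = q * zc n z 1 ^ 2 * zc n z n :=
      fun m h1 h2 => hall (n - 1 - m) m (by omega) h1
    have hz2A : zc n z 2 = q * zc n z 1 ^ 2 * zc n z n := by
      have := huA 1 (le_refl 1) (by omega)
      rw [hvdef] at this
      simpa using this
    have hprod2 : ∀ m, 2 ≤ m → m ≤ n - 1 →
        zc n z m * zc n z (m + 1) = q * zc n z 1 ^ 2 * zc n z n := by
      intro m h1 h2
      have := huA m (by omega) h2
      rw [hvdef] at this
      simp only [] at this
      rwa [if_neg (by omega)] at this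
    -- even chain: all even coordinates equal z₂
    have heq : ∀ i : ℕ, 1 ≤ i → 2 * i ≤ n → zc n z (2 * i) = zc n z 2 := by
      intro i
      induction i with
      | zero => omega
      | succ i ih =>
        intro _ hle
        rcases Nat.eq_zero_or_pos i with h0 | h0
        · subst h0; norm_num
        · have e1 := hprod2 (2 * i) (by omega) (by omega)
          have e2 := hprod2 (2 * i + 1) (by omega) (by omega)
          rw [(by omega : 2 * i + 1 + 1 = 2 * (i + 1))] at e2
          have hcan : zc n z (2 * i + 1) ≠ 0 := hnez _ (by omega) (by omega)
          have : zc n z (2 * i + 1) * zc n z (2 * (i + 1)) = zc n z (2 * i + 1) * zc n z (2 * i) := by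
            rw [e2]; linear_combination -e1
          have := mul_left_cancel₀ hcan this
          rw [this]
          exact ih h0 (by omega)
    have hznz2 : zc n z n = zc n z 2 := by
      have := heq (n / 2) (by omega) (by omega)
      rwa [(by omega : 2 * (n / 2) = n)] at this
    -- q z₁² = 1
    have hq1 : q * zc n z 1 ^ 2 = 1 := by
      have h : zc n z 2 = q * zc n z 1 ^ 2 * zc n z 2 := by
        rw [← hznz2] at hz2A ⊢
        exact hz2A
      have hz2ne : zc n z 2 ≠ 0 := by
        rw [← hznz2]
        exact hnez n (by omega) (by omega)
      have : zc n z 2 * (q * zc n z 1 ^ 2 - 1) = 0 := by linear_combination -h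
      rcases mul_eq_zero.mp this with h' | h'
      · exact absurd h' hz2ne
      · linear_combination h'
    -- odd coordinates are 1
    have hodd1 : ∀ i : ℕ, 1 ≤ i → 2 * i + 1 ≤ n - 1 → zc n z (2 * i + 1) = 1 := by
      intro i h1 h2
      have e1 := hprod2 (2 * i) (by omega) (by omega)
      have he := heq i h1 (by omega)
      rw [he, hz2A] at e1
      have := mul_left_cancel₀ hA (by linear_combination e1 :
        (q * zc n z 1 ^ 2 * zc n z n) * zc n z (2 * i + 1) = (q * zc n z 1 ^ 2 * zc n z n) * 1)
      exact this
    -- product evaluation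
    have hC : ∀ i : ℕ, 2 * i + 1 ≤ n →
        ∏ k ∈ range (2 * i + 1), zc n z (k + 1) = zc n z 1 * zc n z 2 ^ i := by
      intro i
      induction i with
      | zero => intro _; simp
      | succ i ih =>
        intro hle
        have h1 : range (2 * (i + 1) + 1) = range ((2 * i + 1) + 1 + 1) := by
          congr 1 <;> omega
        rw [h1, Finset.prod_range_succ, Finset.prod_range_succ, ih (by omega)]
        rw [(by omega : 2 * i + 1 + 1 = 2 * (i + 1))]
        rw [heq (i + 1) (by omega) (by omega), hodd1 (i + 1) (by omega) (by omega :
          2 * (i + 1) + 1 ≤ n - 1), pow_succ]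
        ring
    have hPr : (∏ k, z k) = ∏ k ∈ range n, zc n z (k + 1) := by
      rw [← Fin.prod_univ_eq_prod_range (fun k => zc n z (k + 1)) n]
      apply Finset.prod_congr rfl
      intro k _
      rw [zc_eq n z (k.val + 1) (by omega) (by omega)]
      congr 1
    have hrange : range n = range ((n - 1) + 1) := by congr 1; omega
    have hfinal : zc n z 1 * zc n z 2 ^ (n / 2) = 2 := by
      have h2 : (∏ k ∈ range n, zc n z (k + 1))
          = (∏ k ∈ range (n - 1), zc n z (k + 1)) * zc n z (n - 1 + 1) := by
        rw [hrange, Finset.prod_range_succ]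
      have h3 := hC (n / 2 - 1) (by omega)
      rw [(by omega : 2 * (n / 2 - 1) + 1 = n - 1)] at h3
      rw [h3, (by omega : n - 1 + 1 = n), hznz2] at h2
      have h4 : zc n z 2 ^ (n / 2 - 1) * zc n z 2 = zc n z 2 ^ (n / 2) := by
        rw [← pow_succ]
        congr 1
        omega
      rw [← hP2, hPr, h2]
      linear_combination -zc n z 1 * h4
    exact ⟨hq1, hfinal⟩

/-- **Small-quantum-cohomology relations at the critical points.**
For even `n ≥ 4`, `q ≠ 0`, and every critical point `p` of `W₀`, setting `f₁ = z₂(p)` and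
`f₂ = i^{n/2}·(2q·z₁(p) − z₂(p)^{n/2})`, one has `f₁^{n+1} = 4q·f₁`, `f₁·f₂ = 0`, and
`f₂² = −4q + f₁ⁿ`. -/
theorem quadric_mirror_quantum_relations (n : ℕ) (hn : 4 ≤ n) (hev : Even n)
    (q : ℂ) (hq : q ≠ 0) (z : Fin n → ℂ) (hz : IsCritPt n q z) :
    let f₁ : ℂ := zc n z 2
    let f₂ : ℂ := Complex.I ^ (n / 2) * (2 * q * zc n z 1 - (zc n z 2) ^ (n / 2))
    f₁ ^ (n + 1) = 4 * q * f₁ ∧ f₁ * f₂ = 0 ∧ f₂ ^ 2 = -4 * q + f₁ ^ n := by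
  
  have hP : (∏ k, z k) ≠ 1 := hz.1
  obtain ⟨t, ht⟩ := hev
  show zc n z 2 ^ (n + 1) = 4 * q * zc n z 2 ∧
    zc n z 2 * (Complex.I ^ (n / 2) * (2 * q * zc n z 1 - zc n z 2 ^ (n / 2))) = 0 ∧
    (Complex.I ^ (n / 2) * (2 * q * zc n z 1 - zc n z 2 ^ (n / 2))) ^ 2
      = -4 * q + zc n z 2 ^ n
  rcases crit_cases n hn ⟨t, ht⟩ q hq z hz hP with ⟨hq1, hp2⟩ | ⟨hz2, hq1⟩
  · -- V(I₁)
    have h1 : zc n z 2 ^ (n / 2) = 2 * q * zc n z 1 := by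
      linear_combination q * zc n z 1 * hp2 - zc n z 2 ^ (n / 2) * hq1
    have hf20 : Complex.I ^ (n / 2) * (2 * q * zc n z 1 - zc n z 2 ^ (n / 2)) = 0 := by
      rw [h1]; ring
    have hsq : zc n z 2 ^ n = (zc n z 2 ^ (n / 2)) ^ 2 := by
      rw [← pow_mul]; congr 1; omega
    have hf1n : zc n z 2 ^ n = 4 * q := by
      rw [hsq, h1]
      linear_combination 4 * q * hq1
    refine ⟨?_, ?_, ?_⟩
    · rw [pow_succ, hf1n]
    · rw [hf20]; ring
    · rw [hf20, hf1n]; norm_num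
  · -- V(I₂)
    have hp1 : zc n z 2 ^ (n / 2) = 0 := by
      rw [hz2]; exact zero_pow (by omega)
    have hpn : zc n z 2 ^ n = 0 := by
      rw [hz2]; exact zero_pow (by omega)
    have hI : (Complex.I ^ (n / 2)) ^ 2 = (-1 : ℂ) ^ (n / 2) := by
      rw [← pow_mul, (by ring : n / 2 * 2 = 2 * (n / 2)), pow_mul, Complex.I_sq]
    have hpow : ((-1 : ℂ)) ^ (n / 2) * (-1 : ℂ) ^ (n / 2 - 1) = -1 := by
      rw [← pow_add, (by omega : n / 2 + (n / 2 - 1) = n - 1)]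
      exact Odd.neg_one_pow ⟨n / 2 - 1, by omega⟩
    refine ⟨?_, ?_, ?_⟩
    · rw [hz2]; rw [zero_pow (by omega)]; ring
    · rw [hz2]; ring
    · rw [hp1, hpn]
      calc (Complex.I ^ (n / 2) * (2 * q * zc n z 1 - 0)) ^ 2
          = (Complex.I ^ (n / 2)) ^ 2 * (4 * q * (q * zc n z 1 ^ 2)) := by ring
        _ = (-1 : ℂ) ^ (n / 2) * (4 * q * (-1 : ℂ) ^ (n / 2 - 1)) := by rw [hI, hq1]
        _ = 4 * q * ((-1 : ℂ) ^ (n / 2) * (-1 : ℂ) ^ (n / 2 - 1)) := by ring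
        _ = -4 * q + 0 := by rw [hpow]; ring
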